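/- (Lemma 1, convexity.) The indirect Wyner–Ziv rate-distortion function is jointly convex: for all (D_1,D_{s1}) and (D_2,D_{s2}) at which R_WZ is finite and all λ ∈ [0,1], R_WZ(λ·D_1 + (1−λ)·D_2, λ·D_{s1} + (1−λ)·D_{s2}) ≤ λ·R_WZ(D_1,D_{s1}) + (1−λ)·R_WZ(D_2,D_{s2}). -/
import Mathlib


open scoped BigOperators

namespace Stmt3

variable {𝒮 𝒳 𝒴 Sh Xh : Type}

/-- Marginal pmf of the observation `X` under the joint pmf `p` on `𝒮 × 𝒳 × 𝒴`. -/
noncomputable def pXm [Fintype 𝒮] [Fintype 𝒴] (p : 𝒮 × 𝒳 × 𝒴 → ℝ) : 𝒳 → ℝ :=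
  fun x => ∑ s, ∑ y, p (s, x, y)

/-- Marginal pmf of the side information `Y`. -/
noncomputable def pYm [Fintype 𝒮] [Fintype 𝒳] (p : 𝒮 × 𝒳 × 𝒴 → ℝ) : 𝒴 → ℝ :=
  fun y => ∑ s, ∑ x, p (s, x, y)

/-- Marginal pmf of the (ℕ-valued) auxiliary variable `U`, where `q x u = P(U = u | X = x)`. -/
noncomputable def pUm [Fintype 𝒮] [Fintype 𝒳] [Fintype 𝒴] (p : 𝒮 × 𝒳 × 𝒴 → ℝ)
    (q : 𝒳 → ℕ → ℝ) : ℕ → ℝ :=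
  fun u => ∑ x, pXm p x * q x u

/-- Joint pmf of `(Y, U)` under the law `P_{SXY}·P_{U|X}`. -/
noncomputable def pYUm [Fintype 𝒮] [Fintype 𝒳] (p : 𝒮 × 𝒳 × 𝒴 → ℝ)
    (q : 𝒳 → ℕ → ℝ) : 𝒴 → ℕ → ℝ :=
  fun y u => ∑ s, ∑ x, p (s, x, y) * q x u

/-- Base-2 Shannon mutual information `I(X;U)`. -/
noncomputable def IXU [Fintype 𝒮] [Fintype 𝒳] [Fintype 𝒴] (p : 𝒮 × 𝒳 × 𝒴 → ℝ)
    (q : 𝒳 → ℕ → ℝ) : ℝ :=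
  ∑ x, ∑' u, pXm p x * q x u * Real.logb 2 (q x u / pUm p q u)

/-- Base-2 Shannon mutual information `I(U;Y)`. -/
noncomputable def IUY [Fintype 𝒮] [Fintype 𝒳] [Fintype 𝒴] (p : 𝒮 × 𝒳 × 𝒴 → ℝ)
    (q : 𝒳 → ℕ → ℝ) : ℝ :=
  ∑ y, ∑' u, pYUm p q y u * Real.logb 2 (pYUm p q y u / (pYm p y * pUm p q u))

/-- Expected distortion `E[d(X, x̂(U,Y))]` on the observation. -/
noncomputable def EdX [Fintype 𝒮] [Fintype 𝒳] [Fintype 𝒴] (p : 𝒮 × 𝒳 × 𝒴 → ℝ)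
    (q : 𝒳 → ℕ → ℝ) (d : 𝒳 × Xh → ℝ) (xh : ℕ × 𝒴 → Xh) : ℝ :=
  ∑ s, ∑ x, ∑ y, ∑' u, p (s, x, y) * q x u * d (x, xh (u, y))

/-- Expected distortion `E[d_s(S, ŝ(U,Y))]` on the latent source. -/
noncomputable def EdS [Fintype 𝒮] [Fintype 𝒳] [Fintype 𝒴] (p : 𝒮 × 𝒳 × 𝒴 → ℝ)
    (q : 𝒳 → ℕ → ℝ) (ds : 𝒮 × Sh → ℝ) (sh : ℕ × 𝒴 → Sh) : ℝ :=
  ∑ s, ∑ x, ∑ y, ∑' u, p (s, x, y) * q x u * ds (s, sh (u, y))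

/-- `q` is a conditional pmf from `𝒳` to `ℕ`. -/
def IsCondPMF (q : 𝒳 → ℕ → ℝ) : Prop :=
  (∀ x u, 0 ≤ q x u) ∧ ∀ x, ∑' u, q x u = 1

/-- `(q, (x̂, ŝ))` is `(D, Ds)`-feasible. -/
def Feasible [Fintype 𝒮] [Fintype 𝒳] [Fintype 𝒴] (p : 𝒮 × 𝒳 × 𝒴 → ℝ)
    (d : 𝒳 × Xh → ℝ) (ds : 𝒮 × Sh → ℝ) (D Ds : ℝ)
    (q : 𝒳 → ℕ → ℝ) (xh : ℕ × 𝒴 → Xh) (sh : ℕ × 𝒴 → Sh) : Prop :=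
  IsCondPMF q ∧ EdX p q d xh ≤ D ∧ EdS p q ds sh ≤ Ds

/-- The indirect Wyner–Ziv rate-distortion function
`R_WZ(D, Ds) = inf { I(X;U) - I(U;Y) : (P_{U|X}, (x̂, ŝ)) is (D,Ds)-feasible }`,
with the infimum over the empty set equal to `+∞` (in `EReal`). -/
noncomputable def RWZ [Fintype 𝒮] [Fintype 𝒳] [Fintype 𝒴] (p : 𝒮 × 𝒳 × 𝒴 → ℝ)
    (d : 𝒳 × Xh → ℝ) (ds : 𝒮 × Sh → ℝ) (D Ds : ℝ) : EReal :=
  sInf { r : EReal | ∃ (q : 𝒳 → ℕ → ℝ) (xh : ℕ × 𝒴 → Xh) (sh : ℕ × 𝒴 → Sh),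
    Feasible p d ds D Ds q xh sh ∧ r = ((IXU p q - IUY p q : ℝ) : EReal) }


/-! ### Auxiliary lemmas -/

lemma aux_summable_of_tsum_eq_one {f : ℕ → ℝ} (h1 : ∑' n, f n = 1) : Summable f := by
  by_contra h
  rw [tsum_eq_zero_of_not_summable h] at h1
  norm_num at h1

lemma aux_sub_le_mul_log {a b : ℝ} (ha : 0 ≤ a) (hb : 0 ≤ b) (h0 : b = 0 → a = 0) :
    a - b ≤ a * Real.log (a / b) := by
  rcases eq_or_lt_of_le hb with hb0 | hb0
  · have ha0 : a = 0 := h0 hb0.symm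
    simp [ha0, ← hb0]
  rcases eq_or_lt_of_le ha with ha0 | ha0
  · simp [← ha0]
    linarith
  · have ht : 0 < a / b := div_pos ha0 hb0
    have h1 : 1 - (a / b)⁻¹ ≤ Real.log (a / b) := Real.one_sub_inv_le_log_of_pos ht
    have h2 : (a / b)⁻¹ = b / a := inv_div a b
    rw [h2] at h1
    have h3 := mul_le_mul_of_nonneg_left h1 ha
    calc a - b = a * (1 - b / a) := by field_simp
    _ ≤ a * Real.log (a / b) := h3

lemma aux_summable_mul_logb {a b : ℕ → ℝ} (C : ℝ)
    (ha0 : ∀ u, 0 ≤ a u) (hb0 : ∀ u, 0 ≤ b u) (hab : ∀ u, a u ≤ C * b u)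
    (hsa : Summable a) (hsb : Summable b) :
    Summable fun u => a u * Real.logb 2 (a u / b u) := by
  have hlog2 : 0 < Real.log 2 := Real.log_pos one_lt_two
  have hbound : ∀ u, |a u * Real.logb 2 (a u / b u)| ≤
      a u * |Real.logb 2 C| + b u / Real.log 2 := by
    intro u
    have hzero : b u = 0 → a u = 0 := by
      intro hbz
      have := hab u
      rw [hbz, mul_zero] at this
      linarith [ha0 u]
    rw [abs_le]
    constructor
    · -- lower bound
      have hlow : (a u - b u) / Real.log 2 ≤ a u * Real.logb 2 (a u / b u) := by
        rw [Real.logb, ← mul_div_assoc]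
        exact (div_le_div_iff_of_pos_right hlog2).mpr
          (aux_sub_le_mul_log (ha0 u) (hb0 u) hzero)
      have h1 : -(b u / Real.log 2) ≤ (a u - b u) / Real.log 2 := by
        rw [← neg_div]
        exact (div_le_div_iff_of_pos_right hlog2).mpr (by linarith [ha0 u])
      have h2 : 0 ≤ a u * |Real.logb 2 C| := mul_nonneg (ha0 u) (abs_nonneg _)
      linarith
    · -- upper bound
      rcases eq_or_lt_of_le (ha0 u) with haz | haz
      · rw [← haz, zero_mul, zero_mul, zero_add]
        exact div_nonneg (hb0 u) hlog2.le
      · have hbz : 0 < b u := by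
          rcases eq_or_lt_of_le (hb0 u) with h | h
          · exfalso; have := hzero h.symm; linarith
          · exact h
        have hd : 0 < a u / b u := div_pos haz hbz
        have hC : a u / b u ≤ C := (div_le_iff₀ hbz).mpr (hab u)
        have := Real.logb_le_logb_of_le one_lt_two hd hC
        have h2 : Real.logb 2 (a u / b u) ≤ |Real.logb 2 C| :=
          this.trans (le_abs_self _)
        have h3 := mul_le_mul_of_nonneg_left h2 (ha0 u)
        have h4 : 0 ≤ b u / Real.log 2 := by positivity
        linarith
  have hg : Summable fun u => a u * |Real.logb 2 C| + b u / Real.log 2 :=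
    (hsa.mul_right _).add (hsb.div_const _)
  exact Summable.of_abs (hg.of_nonneg_of_le (fun u => abs_nonneg _) hbound)

lemma aux_mix_tsum (lam : ℝ) {F F₁ F₂ : ℕ → ℝ}
    (he : ∀ u, F (2 * u) = lam * F₁ u) (ho : ∀ u, F (2 * u + 1) = (1 - lam) * F₂ u)
    (h1 : Summable F₁) (h2 : Summable F₂) :
    ∑' n, F n = lam * ∑' u, F₁ u + (1 - lam) * ∑' u, F₂ u := by
  have hse : Summable fun k => F (2 * k) := by
    rw [show (fun k => F (2 * k)) = fun k => lam * F₁ k from funext he]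
    exact h1.mul_left lam
  have hso : Summable fun k => F (2 * k + 1) := by
    rw [show (fun k => F (2 * k + 1)) = fun k => (1 - lam) * F₂ k from funext ho]
    exact h2.mul_left _
  rw [← tsum_even_add_odd hse hso, tsum_congr he, tsum_congr ho,
    tsum_mul_left, tsum_mul_left]

lemma aux_cancel_logb (c a b : ℝ) :
    c * a * Real.logb 2 (c * a / (c * b)) = c * (a * Real.logb 2 (a / b)) := by
  rcases eq_or_ne c 0 with h | h
  · simp [h]
  · rw [mul_div_mul_left a b h]; ring

section AuxP

variable [Fintype 𝒮] [Fintype 𝒳] [Fintype 𝒴]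
variable {p : 𝒮 × 𝒳 × 𝒴 → ℝ} {q : 𝒳 → ℕ → ℝ}

lemma aux_pXm_nonneg (hp0 : ∀ z, 0 ≤ p z) (x : 𝒳) : 0 ≤ pXm p x :=
  Finset.sum_nonneg fun _ _ => Finset.sum_nonneg fun _ _ => hp0 _

lemma aux_pYm_nonneg (hp0 : ∀ z, 0 ≤ p z) (y : 𝒴) : 0 ≤ pYm p y :=
  Finset.sum_nonneg fun _ _ => Finset.sum_nonneg fun _ _ => hp0 _

lemma aux_pXm_le_one (hp0 : ∀ z, 0 ≤ p z) (hp1 : ∑ z : 𝒮 × 𝒳 × 𝒴, p z = 1) (x : 𝒳) :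
    pXm p x ≤ 1 := by
  rw [← hp1, Fintype.sum_prod_type]
  refine Finset.sum_le_sum fun s _ => ?_
  rw [Fintype.sum_prod_type]
  exact Finset.single_le_sum
    (f := fun x' => ∑ y, p (s, x', y))
    (fun x' _ => Finset.sum_nonneg fun _ _ => hp0 _) (Finset.mem_univ x)

lemma aux_pYm_le_one (hp0 : ∀ z, 0 ≤ p z) (hp1 : ∑ z : 𝒮 × 𝒳 × 𝒴, p z = 1) (y : 𝒴) :
    pYm p y ≤ 1 := by
  rw [← hp1, Fintype.sum_prod_type]
  refine Finset.sum_le_sum fun s _ => ?_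
  rw [Fintype.sum_prod_type]
  refine Finset.sum_le_sum fun x _ => ?_
  exact Finset.single_le_sum (f := fun y' => p (s, x, y'))
    (fun y' _ => hp0 _) (Finset.mem_univ y)

lemma aux_summable_q (hq : IsCondPMF q) (x : 𝒳) : Summable (q x) :=
  aux_summable_of_tsum_eq_one (hq.2 x)

lemma aux_q_le_one (hq : IsCondPMF q) (x : 𝒳) (u : ℕ) : q x u ≤ 1 := by
  rw [← hq.2 x]
  exact Summable.le_tsum (aux_summable_q hq x) u fun j _ => hq.1 x j

lemma aux_le_pUm (hp0 : ∀ z, 0 ≤ p z) (hq : IsCondPMF q) (x : 𝒳) (u : ℕ) :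
    pXm p x * q x u ≤ pUm p q u :=
  Finset.single_le_sum (f := fun x' => pXm p x' * q x' u)
    (fun x' _ => mul_nonneg (aux_pXm_nonneg hp0 x') (hq.1 x' u)) (Finset.mem_univ x)

lemma aux_pUm_nonneg (hp0 : ∀ z, 0 ≤ p z) (hq : IsCondPMF q) (u : ℕ) :
    0 ≤ pUm p q u :=
  Finset.sum_nonneg fun x' _ => mul_nonneg (aux_pXm_nonneg hp0 x') (hq.1 x' u)

lemma aux_pYUm_nonneg (hp0 : ∀ z, 0 ≤ p z) (hq : IsCondPMF q) (y : 𝒴) (u : ℕ) :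
    0 ≤ pYUm p q y u :=
  Finset.sum_nonneg fun s _ => Finset.sum_nonneg fun x _ =>
    mul_nonneg (hp0 _) (hq.1 x u)

lemma aux_pYUm_le_pUm (hp0 : ∀ z, 0 ≤ p z) (hq : IsCondPMF q) (y : 𝒴) (u : ℕ) :
    pYUm p q y u ≤ pUm p q u := by
  rw [pYUm, Finset.sum_comm, pUm]
  refine Finset.sum_le_sum fun x _ => ?_
  rw [← Finset.sum_mul]
  refine mul_le_mul_of_nonneg_right ?_ (hq.1 x u)
  rw [pXm]
  refine Finset.sum_le_sum fun s _ => ?_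
  exact Finset.single_le_sum (f := fun y' => p (s, x, y')) (fun _ _ => hp0 _)
    (Finset.mem_univ y)

lemma aux_pYUm_le_pYm (hp0 : ∀ z, 0 ≤ p z) (hq : IsCondPMF q) (y : 𝒴) (u : ℕ) :
    pYUm p q y u ≤ pYm p y := by
  rw [pYUm, pYm]
  refine Finset.sum_le_sum fun s _ => Finset.sum_le_sum fun x _ => ?_
  calc p (s, x, y) * q x u ≤ p (s, x, y) * 1 :=
        mul_le_mul_of_nonneg_left (aux_q_le_one hq x u) (hp0 _)
    _ = p (s, x, y) := mul_one _

lemma aux_summable_pUm (hq : IsCondPMF q) : Summable (pUm p q) := by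
  refine Summable.congr (f := fun u => ∑ x, pXm p x * q x u) ?_ fun u => rfl
  exact summable_sum fun x _ => (aux_summable_q hq x).mul_left _

lemma aux_summable_pYUm (hq : IsCondPMF q) (y : 𝒴) : Summable (pYUm p q y) := by
  refine Summable.congr (f := fun u => ∑ s, ∑ x, p (s, x, y) * q x u) ?_ fun u => rfl
  exact summable_sum fun s _ => summable_sum fun x _ => (aux_summable_q hq x).mul_left _

lemma aux_summable_IXU (hp0 : ∀ z, 0 ≤ p z) (hp1 : ∑ z : 𝒮 × 𝒳 × 𝒴, p z = 1)
    (hq : IsCondPMF q) (x : 𝒳) :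
    Summable fun u => pXm p x * q x u * Real.logb 2 (q x u / pUm p q u) := by
  rcases eq_or_lt_of_le (aux_pXm_nonneg hp0 x) with hx0 | hx0
  · refine Summable.congr (f := fun _ => (0 : ℝ)) summable_zero fun u => ?_
    rw [← hx0, zero_mul, zero_mul]
  · have key : Summable fun u => q x u * Real.logb 2 (q x u / pUm p q u) := by
      refine aux_summable_mul_logb (pXm p x)⁻¹ (hq.1 x) (aux_pUm_nonneg hp0 hq) ?_
        (aux_summable_q hq x) (aux_summable_pUm hq)
      intro u
      have h1 : pXm p x * q x u ≤ pUm p q u := aux_le_pUm hp0 hq x u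
      rw [inv_mul_eq_div, le_div_iff₀ hx0]
      linarith [mul_comm (q x u) (pXm p x)]
    refine Summable.congr (key.mul_left (pXm p x)) fun u => ?_
    ring

lemma aux_summable_IUY (hp0 : ∀ z, 0 ≤ p z) (hp1 : ∑ z : 𝒮 × 𝒳 × 𝒴, p z = 1)
    (hq : IsCondPMF q) (y : 𝒴) :
    Summable fun u => pYUm p q y u * Real.logb 2 (pYUm p q y u / (pYm p y * pUm p q u)) := by
  rcases eq_or_lt_of_le (aux_pYm_nonneg hp0 y) with hy0 | hy0
  · refine Summable.congr (f := fun _ => (0 : ℝ)) summable_zero fun u => ?_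
    have h1 : pYUm p q y u = 0 :=
      le_antisymm (le_of_le_of_eq (aux_pYUm_le_pYm hp0 hq y u) hy0.symm)
        (aux_pYUm_nonneg hp0 hq y u)
    rw [h1, zero_mul]
  · refine aux_summable_mul_logb (pYm p y)⁻¹ (aux_pYUm_nonneg hp0 hq y)
      (fun u => mul_nonneg hy0.le (aux_pUm_nonneg hp0 hq u)) ?_
      (aux_summable_pYUm hq y) ((aux_summable_pUm hq).mul_left _)
    intro u
    have : (pYm p y)⁻¹ * (pYm p y * pUm p q u) = pUm p q u := by
      field_simp
    rw [this]
    exact aux_pYUm_le_pUm hp0 hq y u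

lemma aux_summable_dist {c : ℝ} (hc : 0 ≤ c) {qx : ℕ → ℝ} (hq0 : ∀ u, 0 ≤ qx u)
    (hqs : Summable qx) {g : ℕ → ℝ} (hg0 : ∀ u, 0 ≤ g u) (M : ℝ) (hgM : ∀ u, g u ≤ M) :
    Summable fun u => c * qx u * g u := by
  refine Summable.of_nonneg_of_le
    (fun u => mul_nonneg (mul_nonneg hc (hq0 u)) (hg0 u))
    (fun u => mul_le_mul_of_nonneg_left (hgM u) (mul_nonneg hc (hq0 u)))
    ((hqs.mul_left c).mul_right M)

end AuxP

lemma aux_mix_exists [Fintype 𝒮] [Fintype 𝒳] [Fintype 𝒴] [Fintype Sh] [Fintype Xh]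
    [Nonempty Sh] [Nonempty Xh]
    (p : 𝒮 × 𝒳 × 𝒴 → ℝ) (hp0 : ∀ z, 0 ≤ p z) (hp1 : ∑ z : 𝒮 × 𝒳 × 𝒴, p z = 1)
    (d : 𝒳 × Xh → ℝ) (hd0 : ∀ z, 0 ≤ d z)
    (ds : 𝒮 × Sh → ℝ) (hds0 : ∀ z, 0 ≤ ds z)
    (lam : ℝ) (hlam0 : 0 ≤ lam) (hlam1 : lam ≤ 1)
    (q₁ q₂ : 𝒳 → ℕ → ℝ) (hq₁ : IsCondPMF q₁) (hq₂ : IsCondPMF q₂)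
    (xh₁ xh₂ : ℕ × 𝒴 → Xh) (sh₁ sh₂ : ℕ × 𝒴 → Sh) :
    ∃ (q : 𝒳 → ℕ → ℝ) (xh : ℕ × 𝒴 → Xh) (sh : ℕ × 𝒴 → Sh), IsCondPMF q ∧
      EdX p q d xh = lam * EdX p q₁ d xh₁ + (1 - lam) * EdX p q₂ d xh₂ ∧
      EdS p q ds sh = lam * EdS p q₁ ds sh₁ + (1 - lam) * EdS p q₂ ds sh₂ ∧
      IXU p q - IUY p q =
        lam * (IXU p q₁ - IUY p q₁) + (1 - lam) * (IXU p q₂ - IUY p q₂) := by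
  set q' : 𝒳 → ℕ → ℝ :=
    fun x n => if n % 2 = 0 then lam * q₁ x (n / 2) else (1 - lam) * q₂ x (n / 2)
    with hq'def
  set xh' : ℕ × 𝒴 → Xh :=
    fun z => if z.1 % 2 = 0 then xh₁ (z.1 / 2, z.2) else xh₂ (z.1 / 2, z.2) with hxh'def
  set sh' : ℕ × 𝒴 → Sh :=
    fun z => if z.1 % 2 = 0 then sh₁ (z.1 / 2, z.2) else sh₂ (z.1 / 2, z.2) with hsh'def
  have h2e : ∀ u : ℕ, 2 * u % 2 = 0 := fun u => by omega
  have h3e : ∀ u : ℕ, 2 * u / 2 = u := fun u => by omega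
  have h2o : ∀ u : ℕ, (2 * u + 1) % 2 = 1 := fun u => by omega
  have h3o : ∀ u : ℕ, (2 * u + 1) / 2 = u := fun u => by omega
  have hq'e : ∀ x u, q' x (2 * u) = lam * q₁ x u := by
    intro x u; simp [hq'def, h2e u, h3e u]
  have hq'o : ∀ x u, q' x (2 * u + 1) = (1 - lam) * q₂ x u := by
    intro x u; simp [hq'def, h2o u, h3o u]
  have hx'e : ∀ u (y : 𝒴), xh' (2 * u, y) = xh₁ (u, y) := by
    intro u y; simp [hxh'def, h2e u, h3e u]
  have hx'o : ∀ u (y : 𝒴), xh' (2 * u + 1, y) = xh₂ (u, y) := by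
    intro u y; simp [hxh'def, h2o u, h3o u]
  have hs'e : ∀ u (y : 𝒴), sh' (2 * u, y) = sh₁ (u, y) := by
    intro u y; simp [hsh'def, h2e u, h3e u]
  have hs'o : ∀ u (y : 𝒴), sh' (2 * u + 1, y) = sh₂ (u, y) := by
    intro u y; simp [hsh'def, h2o u, h3o u]
  have hUe : ∀ u, pUm p q' (2 * u) = lam * pUm p q₁ u := by
    intro u
    rw [pUm, pUm, Finset.mul_sum]
    exact Finset.sum_congr rfl fun x _ => by rw [hq'e]; ring
  have hUo : ∀ u, pUm p q' (2 * u + 1) = (1 - lam) * pUm p q₂ u := by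
    intro u
    rw [pUm, pUm, Finset.mul_sum]
    exact Finset.sum_congr rfl fun x _ => by rw [hq'o]; ring
  have hYUe : ∀ (y : 𝒴) u, pYUm p q' y (2 * u) = lam * pYUm p q₁ y u := by
    intro y u
    rw [pYUm, pYUm, Finset.mul_sum]
    refine Finset.sum_congr rfl fun s _ => ?_
    rw [Finset.mul_sum]
    exact Finset.sum_congr rfl fun x _ => by rw [hq'e]; ring
  have hYUo : ∀ (y : 𝒴) u, pYUm p q' y (2 * u + 1) = (1 - lam) * pYUm p q₂ y u := by
    intro y u
    rw [pYUm, pYUm, Finset.mul_sum]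
    refine Finset.sum_congr rfl fun s _ => ?_
    rw [Finset.mul_sum]
    exact Finset.sum_congr rfl fun x _ => by rw [hq'o]; ring
  have hcond : IsCondPMF q' := by
    constructor
    · intro x u
      rw [hq'def]
      dsimp only
      split
      · exact mul_nonneg hlam0 (hq₁.1 x _)
      · exact mul_nonneg (by linarith) (hq₂.1 x _)
    · intro x
      rw [aux_mix_tsum lam (hq'e x) (hq'o x) (aux_summable_q hq₁ x)
        (aux_summable_q hq₂ x), hq₁.2 x, hq₂.2 x]
      ring
  refine ⟨q', xh', sh', hcond, ?_, ?_, ?_⟩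
  · -- EdX
    have key : ∀ (s : 𝒮) (x : 𝒳) (y : 𝒴),
        ∑' u, p (s, x, y) * q' x u * d (x, xh' (u, y)) =
        lam * ∑' u, p (s, x, y) * q₁ x u * d (x, xh₁ (u, y)) +
        (1 - lam) * ∑' u, p (s, x, y) * q₂ x u * d (x, xh₂ (u, y)) := by
      intro s x y
      refine aux_mix_tsum lam (fun u => by rw [hq'e, hx'e]; ring)
        (fun u => by rw [hq'o, hx'o]; ring) ?_ ?_
      · exact aux_summable_dist (hp0 _) (hq₁.1 x) (aux_summable_q hq₁ x)
          (fun u => hd0 _) (Finset.univ.sup' Finset.univ_nonempty fun t : Xh => d (x, t))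
          (fun u => Finset.le_sup' (fun t : Xh => d (x, t)) (Finset.mem_univ _))
      · exact aux_summable_dist (hp0 _) (hq₂.1 x) (aux_summable_q hq₂ x)
          (fun u => hd0 _) (Finset.univ.sup' Finset.univ_nonempty fun t : Xh => d (x, t))
          (fun u => Finset.le_sup' (fun t : Xh => d (x, t)) (Finset.mem_univ _))
    simp only [EdX, key, Finset.mul_sum, Finset.sum_add_distrib]
  · -- EdS
    have key : ∀ (s : 𝒮) (x : 𝒳) (y : 𝒴),
        ∑' u, p (s, x, y) * q' x u * ds (s, sh' (u, y)) =
        lam * ∑' u, p (s, x, y) * q₁ x u * ds (s, sh₁ (u, y)) +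
        (1 - lam) * ∑' u, p (s, x, y) * q₂ x u * ds (s, sh₂ (u, y)) := by
      intro s x y
      refine aux_mix_tsum lam (fun u => by rw [hq'e, hs'e]; ring)
        (fun u => by rw [hq'o, hs'o]; ring) ?_ ?_
      · exact aux_summable_dist (hp0 _) (hq₁.1 x) (aux_summable_q hq₁ x)
          (fun u => hds0 _) (Finset.univ.sup' Finset.univ_nonempty fun t : Sh => ds (s, t))
          (fun u => Finset.le_sup' (fun t : Sh => ds (s, t)) (Finset.mem_univ _))
      · exact aux_summable_dist (hp0 _) (hq₂.1 x) (aux_summable_q hq₂ x)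
          (fun u => hds0 _) (Finset.univ.sup' Finset.univ_nonempty fun t : Sh => ds (s, t))
          (fun u => Finset.le_sup' (fun t : Sh => ds (s, t)) (Finset.mem_univ _))
    simp only [EdS, key, Finset.mul_sum, Finset.sum_add_distrib]
  · -- rate
    have hIXU : IXU p q' = lam * IXU p q₁ + (1 - lam) * IXU p q₂ := by
      have key : ∀ x : 𝒳,
          ∑' n, pXm p x * q' x n * Real.logb 2 (q' x n / pUm p q' n) =
          lam * ∑' u, pXm p x * q₁ x u * Real.logb 2 (q₁ x u / pUm p q₁ u) +
          (1 - lam) * ∑' u, pXm p x * q₂ x u * Real.logb 2 (q₂ x u / pUm p q₂ u) := by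
        intro x
        refine aux_mix_tsum lam ?_ ?_ (aux_summable_IXU hp0 hp1 hq₁ x)
          (aux_summable_IXU hp0 hp1 hq₂ x)
        · intro u
          rw [hq'e, hUe]
          calc pXm p x * (lam * q₁ x u) *
                Real.logb 2 (lam * q₁ x u / (lam * pUm p q₁ u))
              = pXm p x * (lam * q₁ x u *
                  Real.logb 2 (lam * q₁ x u / (lam * pUm p q₁ u))) := by ring
            _ = pXm p x * (lam * (q₁ x u * Real.logb 2 (q₁ x u / pUm p q₁ u))) := by
                rw [aux_cancel_logb]
            _ = lam * (pXm p x * q₁ x u * Real.logb 2 (q₁ x u / pUm p q₁ u)) := by ring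
        · intro u
          rw [hq'o, hUo]
          calc pXm p x * ((1 - lam) * q₂ x u) *
                Real.logb 2 ((1 - lam) * q₂ x u / ((1 - lam) * pUm p q₂ u))
              = pXm p x * ((1 - lam) * q₂ x u *
                  Real.logb 2 ((1 - lam) * q₂ x u / ((1 - lam) * pUm p q₂ u))) := by ring
            _ = pXm p x * ((1 - lam) * (q₂ x u * Real.logb 2 (q₂ x u / pUm p q₂ u))) := by
                rw [aux_cancel_logb]
            _ = (1 - lam) * (pXm p x * q₂ x u * Real.logb 2 (q₂ x u / pUm p q₂ u)) := by
                ring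
      simp only [IXU, key, Finset.mul_sum, Finset.sum_add_distrib]
    have hIUY : IUY p q' = lam * IUY p q₁ + (1 - lam) * IUY p q₂ := by
      have key : ∀ y : 𝒴,
          ∑' n, pYUm p q' y n * Real.logb 2 (pYUm p q' y n / (pYm p y * pUm p q' n)) =
          lam * ∑' u, pYUm p q₁ y u *
            Real.logb 2 (pYUm p q₁ y u / (pYm p y * pUm p q₁ u)) +
          (1 - lam) * ∑' u, pYUm p q₂ y u *
            Real.logb 2 (pYUm p q₂ y u / (pYm p y * pUm p q₂ u)) := by
        intro y
        refine aux_mix_tsum lam ?_ ?_ (aux_summable_IUY hp0 hp1 hq₁ y)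
          (aux_summable_IUY hp0 hp1 hq₂ y)
        · intro u
          rw [hYUe, hUe, show pYm p y * (lam * pUm p q₁ u) =
            lam * (pYm p y * pUm p q₁ u) from by ring, aux_cancel_logb]
        · intro u
          rw [hYUo, hUo, show pYm p y * ((1 - lam) * pUm p q₂ u) =
            (1 - lam) * (pYm p y * pUm p q₂ u) from by ring, aux_cancel_logb]
      simp only [IUY, key, Finset.mul_sum, Finset.sum_add_distrib]
    rw [hIXU, hIUY]
    ring

/-- **Lemma 1 (convexity).** The indirect Wyner–Ziv rate-distortion function is jointly
convex: for all `(D₁, Ds₁)`, `(D₂, Ds₂)` at which it is finite (with finite real values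
`r₁`, `r₂`) and all `λ ∈ [0,1]`,
`R_WZ(λ·D₁ + (1-λ)·D₂, λ·Ds₁ + (1-λ)·Ds₂) ≤ λ·r₁ + (1-λ)·r₂`. -/
theorem RWZ_convex
    [Fintype 𝒮] [Fintype 𝒳] [Fintype 𝒴] [Fintype Sh] [Fintype Xh]
    [Nonempty 𝒮] [Nonempty 𝒳] [Nonempty 𝒴] [Nonempty Sh] [Nonempty Xh]
    (p : 𝒮 × 𝒳 × 𝒴 → ℝ) (hp0 : ∀ z, 0 ≤ p z) (hp1 : ∑ z : 𝒮 × 𝒳 × 𝒴, p z = 1)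
    (d : 𝒳 × Xh → ℝ) (hd0 : ∀ z, 0 ≤ d z)
    (ds : 𝒮 × Sh → ℝ) (hds0 : ∀ z, 0 ≤ ds z)
    (D₁ D₂ Ds₁ Ds₂ : ℝ) (r₁ r₂ : ℝ)
    (h₁ : RWZ p d ds D₁ Ds₁ = ((r₁ : ℝ) : EReal))
    (h₂ : RWZ p d ds D₂ Ds₂ = ((r₂ : ℝ) : EReal))
    (lam : ℝ) (hlam0 : 0 ≤ lam) (hlam1 : lam ≤ 1) :
    RWZ p d ds (lam * D₁ + (1 - lam) * D₂) (lam * Ds₁ + (1 - lam) * Ds₂) ≤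
      ((lam * r₁ + (1 - lam) * r₂ : ℝ) : EReal) := by
  have key : ∀ ε : ℝ, 0 < ε →
      RWZ p d ds (lam * D₁ + (1 - lam) * D₂) (lam * Ds₁ + (1 - lam) * Ds₂) ≤
        ((lam * r₁ + (1 - lam) * r₂ + ε : ℝ) : EReal) := by
    intro ε hε
    have hlt₁ : RWZ p d ds D₁ Ds₁ < ((r₁ + ε : ℝ) : EReal) := by
      rw [h₁]; exact EReal.coe_lt_coe_iff.mpr (by linarith)
    have hlt₂ : RWZ p d ds D₂ Ds₂ < ((r₂ + ε : ℝ) : EReal) := by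
      rw [h₂]; exact EReal.coe_lt_coe_iff.mpr (by linarith)
    rw [RWZ] at hlt₁ hlt₂
    obtain ⟨v₁, hv₁mem, hv₁lt⟩ := sInf_lt_iff.mp hlt₁
    obtain ⟨q₁, xh₁, sh₁, hfeas₁, rfl⟩ := hv₁mem
    obtain ⟨v₂, hv₂mem, hv₂lt⟩ := sInf_lt_iff.mp hlt₂
    obtain ⟨q₂, xh₂, sh₂, hfeas₂, rfl⟩ := hv₂mem
    have hR₁ : IXU p q₁ - IUY p q₁ < r₁ + ε := EReal.coe_lt_coe_iff.mp hv₁lt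
    have hR₂ : IXU p q₂ - IUY p q₂ < r₂ + ε := EReal.coe_lt_coe_iff.mp hv₂lt
    obtain ⟨q', xh', sh', hcond, hEdX, hEdS, hrate⟩ :=
      aux_mix_exists p hp0 hp1 d hd0 ds hds0 lam hlam0 hlam1 q₁ q₂
        hfeas₁.1 hfeas₂.1 xh₁ xh₂ sh₁ sh₂
    have hmem : ((lam * (IXU p q₁ - IUY p q₁) +
        (1 - lam) * (IXU p q₂ - IUY p q₂) : ℝ) : EReal) ∈
        { r : EReal | ∃ (q : 𝒳 → ℕ → ℝ) (xh : ℕ × 𝒴 → Xh) (sh : ℕ × 𝒴 → Sh),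
          Feasible p d ds (lam * D₁ + (1 - lam) * D₂) (lam * Ds₁ + (1 - lam) * Ds₂)
            q xh sh ∧ r = ((IXU p q - IUY p q : ℝ) : EReal) } := by
      refine ⟨q', xh', sh', ⟨hcond, ?_, ?_⟩, by rw [hrate]⟩
      · rw [hEdX]
        exact add_le_add (mul_le_mul_of_nonneg_left hfeas₁.2.1 hlam0)
          (mul_le_mul_of_nonneg_left hfeas₂.2.1 (by linarith))
      · rw [hEdS]
        exact add_le_add (mul_le_mul_of_nonneg_left hfeas₁.2.2 hlam0)
          (mul_le_mul_of_nonneg_left hfeas₂.2.2 (by linarith))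
    calc RWZ p d ds (lam * D₁ + (1 - lam) * D₂) (lam * Ds₁ + (1 - lam) * Ds₂)
        ≤ ((lam * (IXU p q₁ - IUY p q₁) +
            (1 - lam) * (IXU p q₂ - IUY p q₂) : ℝ) : EReal) := by
          rw [RWZ]; exact sInf_le hmem
      _ ≤ ((lam * r₁ + (1 - lam) * r₂ + ε : ℝ) : EReal) := by
          refine EReal.coe_le_coe_iff.mpr ?_
          nlinarith [mul_le_mul_of_nonneg_left hR₁.le hlam0,
            mul_le_mul_of_nonneg_left hR₂.le (by linarith : (0:ℝ) ≤ 1 - lam)]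
  by_contra hcon
  rw [not_le] at hcon
  obtain ⟨x, hx1, hx2⟩ := EReal.lt_iff_exists_real_btwn.mp hcon
  have hx1' : lam * r₁ + (1 - lam) * r₂ < x := EReal.coe_lt_coe_iff.mp hx1
  have hkey := key (x - (lam * r₁ + (1 - lam) * r₂)) (by linarith)
  rw [show lam * r₁ + (1 - lam) * r₂ + (x - (lam * r₁ + (1 - lam) * r₂)) = x
    from by ring] at hkey
  exact absurd (hx2.trans_le hkey) (lt_irrefl _)

end Stmt3
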